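/- arXiv:2006.08040 — 2 statements merged into one kernel-verified Lean document; each statement's English description precedes it below -/
import Mathlib

section
/- Unbiasedness of the lifted linear-bandit estimator: Let H be a symmetric positive definite (d+1)×(d+1) real matrix, w⁺ ∈ R^{d+1}, ℓ ∈ R^d, and ℓ⁺ = (ℓ, 0) ∈ R^{d+1}. Let s be sampled uniformly at random from the unit sphere of the orthogonal complement of H^{−1/2}e_{d+1} in R^{d+1} (a d-dimensional subspace), and set w̃⁺ = w⁺ + H^{−1/2}s and ℓ̂⁺ = d·⟨w̃⁺, ℓ⁺⟩·H^{1/2}s. Then E[ℓ̂⁺_i] = ℓ_i for every coordinate i ∈ {1,…,d}; more precisely, E[ℓ̂⁺] = ℓ⁺ − (e_{d+1}e_{d+1}ᵀ H^{−1} ℓ⁺)/‖H^{−1/2}e_{d+1}‖₂². -/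
open MeasureTheory Matrix Finset

/-- dot product on `ℝ^n`. -/
noncomputable def dotp {n : ℕ} (x y : Fin n → ℝ) : ℝ := ∑ i, x i * y i

lemma dotp_eq_dot {n : ℕ} (x y : Fin n → ℝ) : dotp x y = x ⬝ᵥ y := rfl

lemma dotp_comm {n : ℕ} (x y : Fin n → ℝ) : dotp x y = dotp y x := by
  rw [dotp_eq_dot, dotp_eq_dot, dotProduct_comm]

lemma dotp_add_right {n : ℕ} (a x y : Fin n → ℝ) : dotp a (x + y) = dotp a x + dotp a y := by
  simp [dotp, mul_add, Finset.sum_add_distrib]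

lemma dotp_sub_right {n : ℕ} (a x y : Fin n → ℝ) : dotp a (x - y) = dotp a x - dotp a y := by
  simp [dotp, mul_sub, Finset.sum_sub_distrib]

lemma dotp_smul_right {n : ℕ} (c : ℝ) (a x : Fin n → ℝ) : dotp a (c • x) = c * dotp a x := by
  simp only [dotp, Pi.smul_apply, smul_eq_mul, Finset.mul_sum]
  exact Finset.sum_congr rfl fun i _ => by ring

lemma dotp_smul_left {n : ℕ} (c : ℝ) (a x : Fin n → ℝ) : dotp (c • a) x = c * dotp a x := by
  rw [dotp_comm, dotp_smul_right, dotp_comm]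

lemma dotp_sub_left {n : ℕ} (a b x : Fin n → ℝ) : dotp (a - b) x = dotp a x - dotp b x := by
  rw [dotp_comm, dotp_sub_right, dotp_comm a x, dotp_comm b x]

lemma dotp_add_left {n : ℕ} (a b x : Fin n → ℝ) : dotp (a + b) x = dotp a x + dotp b x := by
  rw [dotp_comm, dotp_add_right, dotp_comm a x, dotp_comm b x]

lemma dotp_zero_left {n : ℕ} (x : Fin n → ℝ) : dotp 0 x = 0 := by simp [dotp]
lemma dotp_zero_right {n : ℕ} (x : Fin n → ℝ) : dotp x 0 = 0 := by simp [dotp]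

lemma dotp_neg_left {n : ℕ} (a x : Fin n → ℝ) : dotp (-a) x = -dotp a x := by
  simp [dotp, Finset.sum_neg_distrib]

lemma dotp_self_nonneg {n : ℕ} (x : Fin n → ℝ) : 0 ≤ dotp x x :=
  Finset.sum_nonneg fun i _ => mul_self_nonneg _

lemma dotp_self_ne_zero {n : ℕ} {x : Fin n → ℝ} (hx : x ≠ 0) : dotp x x ≠ 0 := by
  intro h
  apply hx
  ext i
  have h1 : ∀ j ∈ Finset.univ, (0:ℝ) ≤ x j * x j := fun j _ => mul_self_nonneg _
  have := (Finset.sum_eq_zero_iff_of_nonneg h1).mp h i (Finset.mem_univ i)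
  simpa [mul_self_eq_zero] using this

lemma dotp_mulVec_right {n : ℕ} (A : Matrix (Fin n) (Fin n) ℝ) (x y : Fin n → ℝ) :
    dotp x (A.mulVec y) = dotp (Aᵀ.mulVec x) y := by
  rw [dotp_eq_dot, dotp_eq_dot, Matrix.dotProduct_mulVec, Matrix.mulVec_transpose]

noncomputable def hh {n : ℕ} (v : Fin n → ℝ) : Matrix (Fin n) (Fin n) ℝ :=
  1 - (2 / dotp v v) • Matrix.vecMulVec v v

lemma vecMulVec_mul_vecMulVec' {n : ℕ} (v : Fin n → ℝ) :
    Matrix.vecMulVec v v * Matrix.vecMulVec v v = dotp v v • Matrix.vecMulVec v v := by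
  ext i j
  simp only [Matrix.mul_apply, Matrix.vecMulVec_apply, Matrix.smul_apply, smul_eq_mul, dotp]
  rw [Finset.sum_mul]
  exact Finset.sum_congr rfl fun k _ => by ring

lemma vecMulVec_transpose' {n : ℕ} (v : Fin n → ℝ) :
    (Matrix.vecMulVec v v)ᵀ = Matrix.vecMulVec v v := by
  ext i j; simp [Matrix.vecMulVec_apply, mul_comm]

lemma hh_symm {n : ℕ} (v : Fin n → ℝ) : (hh v)ᵀ = hh v := by
  simp [hh, Matrix.transpose_smul, vecMulVec_transpose']

lemma hh_orth {n : ℕ} (v : Fin n → ℝ) (hv : dotp v v ≠ 0) : (hh v)ᵀ * hh v = 1 := by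
  rw [hh_symm]
  have expand : hh v * hh v =
      1 - (2 / dotp v v) • Matrix.vecMulVec v v - (2 / dotp v v) • Matrix.vecMulVec v v
        + ((2 / dotp v v) * (2 / dotp v v)) • (Matrix.vecMulVec v v * Matrix.vecMulVec v v) := by
    simp only [hh, Matrix.sub_mul, Matrix.mul_sub, Matrix.one_mul, Matrix.mul_one,
      Matrix.smul_mul, Matrix.mul_smul, smul_smul, smul_sub]
    abel
  rw [expand, vecMulVec_mul_vecMulVec', smul_smul]
  have h3 : 2 / dotp v v * (2 / dotp v v) * dotp v v = 2 / dotp v v + 2 / dotp v v := by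
    field_simp; ring
  rw [h3, add_smul]
  abel

lemma vecMulVec_mulVec' {n : ℕ} (v x : Fin n → ℝ) :
    (Matrix.vecMulVec v v).mulVec x = dotp v x • v := by
  ext j
  simp only [Matrix.mulVec, dotProduct, Matrix.vecMulVec_apply, Pi.smul_apply,
    smul_eq_mul, dotp]
  rw [Finset.sum_mul]
  exact Finset.sum_congr rfl fun k _ => by ring

lemma hh_mulVec {n : ℕ} (v x : Fin n → ℝ) :
    (hh v).mulVec x = x - ((2 / dotp v v) * dotp v x) • v := by
  rw [hh, Matrix.sub_mulVec, Matrix.one_mulVec, Matrix.smul_mulVec, vecMulVec_mulVec',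
    smul_smul]

lemma hh_mulVec_self {n : ℕ} (v : Fin n → ℝ) (hv : dotp v v ≠ 0) :
    (hh v).mulVec v = -v := by
  rw [hh_mulVec]
  have : 2 / dotp v v * dotp v v = 2 := by field_simp
  rw [this, two_smul]
  ext i; simp [Pi.sub_apply]

lemma hh_mulVec_orth {n : ℕ} (v x : Fin n → ℝ) (hx : dotp v x = 0) :
    (hh v).mulVec x = x := by
  rw [hh_mulVec, hx]; simp

lemma continuous_dotp {n : ℕ} (a : Fin n → ℝ) : Continuous (fun s : Fin n → ℝ => dotp a s) := by
  unfold dotp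
  exact continuous_finset_sum _ fun i _ => continuous_const.mul (continuous_apply i)

lemma continuous_dotp' {n : ℕ} (a : Fin n → ℝ) : Continuous (fun s : Fin n → ℝ => dotp s a) := by
  simp only [fun s => dotp_comm s a]
  exact continuous_dotp a

lemma continuous_mulVec' {n : ℕ} (O : Matrix (Fin n) (Fin n) ℝ) :
    Continuous (fun s : Fin n → ℝ => O.mulVec s) := by
  refine continuous_pi fun i => ?_
  show Continuous fun s : Fin n → ℝ => ∑ j, O i j * s j
  exact continuous_finset_sum _ fun j _ => continuous_const.mul (continuous_apply j)

lemma continuous_dotp_mulVec {n : ℕ} (a : Fin n → ℝ) (O : Matrix (Fin n) (Fin n) ℝ) :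
    Continuous (fun s : Fin n → ℝ => dotp a (O.mulVec s)) := by
  have h := (continuous_dotp a).comp (continuous_mulVec' O)
  exact h

lemma abs_dotp_le {n : ℕ} (a s : Fin n → ℝ) (hs : dotp s s = 1) :
    |dotp a s| ≤ ∑ i, |a i| := by
  have hb : ∀ i, |s i| ≤ 1 := by
    intro i
    have h1 : s i * s i ≤ 1 := by
      rw [← hs]
      exact Finset.single_le_sum (f := fun j => s j * s j)
        (fun j _ => mul_self_nonneg _) (Finset.mem_univ i)
    nlinarith [abs_nonneg (s i), sq_abs (s i)]
  calc |dotp a s| ≤ ∑ i, |a i * s i| := Finset.abs_sum_le_sum_abs _ _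
    _ ≤ ∑ i, |a i| := by
        refine Finset.sum_le_sum fun i _ => ?_
        rw [abs_mul]
        nlinarith [abs_nonneg (a i), hb i, abs_nonneg (s i)]

lemma integrable_of_cont_bound {n : ℕ} (μ : Measure (Fin n → ℝ)) [IsProbabilityMeasure μ]
    (f : (Fin n → ℝ) → ℝ) (hf : Continuous f) (C : ℝ) (hC : ∀ᵐ s ∂μ, |f s| ≤ C) :
    Integrable f μ := by
  refine Integrable.mono' (integrable_const C) hf.aestronglyMeasurable ?_
  filter_upwards [hC] with s hs
  simpa using hs

lemma integral_inv' {n : ℕ} (μ : Measure (Fin n → ℝ))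
    (O : Matrix (Fin n) (Fin n) ℝ) (hmap : Measure.map O.mulVec μ = μ)
    (f : (Fin n → ℝ) → ℝ) (hf : Continuous f) :
    ∫ s, f s ∂μ = ∫ s, f (O.mulVec s) ∂μ := by
  conv_lhs => rw [← hmap]
  exact integral_map (continuous_mulVec' O).measurable.aemeasurable hf.aestronglyMeasurable

section Moments

variable {n : ℕ} (μ : Measure (Fin n → ℝ)) [IsProbabilityMeasure μ] (u : Fin n → ℝ)

lemma integrable_lin (hs : ∀ᵐ s ∂μ, dotp s s = 1) (a : Fin n → ℝ) :
    Integrable (fun s => dotp a s) μ := by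
  refine integrable_of_cont_bound μ _ (continuous_dotp a) (∑ i, |a i|) ?_
  filter_upwards [hs] with s h1
  exact abs_dotp_le a s h1

lemma integrable_quad (hs : ∀ᵐ s ∂μ, dotp s s = 1) (a b : Fin n → ℝ) :
    Integrable (fun s => dotp a s * dotp b s) μ := by
  refine integrable_of_cont_bound μ _ ((continuous_dotp a).mul (continuous_dotp b))
    ((∑ i, |a i|) * (∑ i, |b i|)) ?_
  filter_upwards [hs] with s h1
  rw [abs_mul]
  have ha := abs_dotp_le a s h1
  have hb := abs_dotp_le b s h1
  exact mul_le_mul ha hb (abs_nonneg _) ((abs_nonneg _).trans ha)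

variable (hu : dotp u u = 1)
  (hsupp : ∀ᵐ s ∂μ, dotp s s = 1 ∧ dotp s u = 0)
  (hinv : ∀ O : Matrix (Fin n) (Fin n) ℝ, Oᵀ * O = 1 →
      O.mulVec u = u → Measure.map O.mulVec μ = μ)

include hu hsupp hinv in
lemma first_moment (a : Fin n → ℝ) : ∫ s, dotp a s ∂μ = 0 := by
  -- reflection through the line spanned by u : O = 2uuᵀ - 1
  set O := (2:ℝ) • Matrix.vecMulVec u u - 1 with hOdef
  have hOsymm : Oᵀ = O := by
    simp [hOdef, Matrix.transpose_smul, vecMulVec_transpose']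
  have hOmulVec : ∀ x, O.mulVec x = (2 * dotp u x) • u - x := by
    intro x
    rw [hOdef, Matrix.sub_mulVec, Matrix.one_mulVec, Matrix.smul_mulVec,
      vecMulVec_mulVec', smul_smul]
  have hOfix : O.mulVec u = u := by
    rw [hOmulVec, hu]
    ext i; simp; ring
  have hOorth : Oᵀ * O = 1 := by
    rw [hOsymm]
    have expand : O * O = ((2:ℝ)*2) • (Matrix.vecMulVec u u * Matrix.vecMulVec u u)
        - (2:ℝ) • Matrix.vecMulVec u u - (2:ℝ) • Matrix.vecMulVec u u + 1 := by
      simp only [hOdef, Matrix.sub_mul, Matrix.mul_sub, Matrix.one_mul, Matrix.mul_one,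
        Matrix.smul_mul, Matrix.mul_smul, smul_smul, smul_sub]
      abel
    rw [expand, vecMulVec_mul_vecMulVec', smul_smul, hu]
    have : (2:ℝ) * 2 * 1 = 2 + 2 := by norm_num
    rw [this, add_smul]
    abel
  have hmap := hinv O hOorth hOfix
  have key : ∫ s, dotp a s ∂μ = ∫ s, dotp a (O.mulVec s) ∂μ :=
    integral_inv' μ O hmap _ (continuous_dotp a)
  have hneg : ∫ s, dotp a (O.mulVec s) ∂μ = ∫ s, -dotp a s ∂μ := by
    refine integral_congr_ae ?_
    filter_upwards [hsupp] with s hs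
    rw [hOmulVec, dotp_sub_right, dotp_smul_right, dotp_comm u s, hs.2]
    ring
  rw [hneg, integral_neg] at key
  linarith

-- quadratic form B
include hu hsupp hinv in
lemma quad_invariance (O : Matrix (Fin n) (Fin n) ℝ) (hOorth : Oᵀ * O = 1) (hOs : Oᵀ = O)
    (hOfix : O.mulVec u = u) (a b : Fin n → ℝ) :
    ∫ s, dotp a s * dotp b s ∂μ = ∫ s, dotp (O.mulVec a) s * dotp (O.mulVec b) s ∂μ := by
  have hmap := hinv O hOorth hOfix
  have key : ∫ s, dotp a s * dotp b s ∂μ = ∫ s, dotp a (O.mulVec s) * dotp b (O.mulVec s) ∂μ :=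
    integral_inv' μ O hmap _
      ((continuous_dotp a).mul (continuous_dotp b))
  rw [key]
  refine integral_congr_ae (Filter.Eventually.of_forall fun s => ?_)
  show dotp a (O.mulVec s) * dotp b (O.mulVec s) = dotp (O.mulVec a) s * dotp (O.mulVec b) s
  rw [dotp_mulVec_right, dotp_mulVec_right, hOs]

end Moments

section Moments2

variable {n : ℕ} (μ : Measure (Fin n → ℝ)) [IsProbabilityMeasure μ] (u : Fin n → ℝ)
  (hu : dotp u u = 1)
  (hsupp : ∀ᵐ s ∂μ, dotp s s = 1 ∧ dotp s u = 0)
  (hinv : ∀ O : Matrix (Fin n) (Fin n) ℝ, Oᵀ * O = 1 →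
      O.mulVec u = u → Measure.map O.mulVec μ = μ)

include hu hsupp hinv in
lemma quad_orth (x y : Fin n → ℝ) (hxy : dotp x y = 0) (huy : dotp u y = 0) :
    ∫ s, dotp x s * dotp y s ∂μ = 0 := by
  by_cases hy : y = 0
  · subst hy
    simp [dotp_zero_left]
  · have hyy := dotp_self_ne_zero hy
    have hfix : (hh y).mulVec u = u :=
      hh_mulVec_orth y u (by rw [dotp_comm]; exact huy)
    have key := quad_invariance μ u hu hsupp hinv (hh y) (hh_orth y hyy) (hh_symm y) hfix x y
    rw [hh_mulVec_orth y x (by rw [dotp_comm]; exact hxy), hh_mulVec_self y hyy] at key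
    have key2 : ∫ s, dotp x s * dotp (-y) s ∂μ = ∫ s, -(dotp x s * dotp y s) ∂μ := by
      refine integral_congr_ae (Filter.Eventually.of_forall fun s => ?_)
      show dotp x s * dotp (-y) s = -(dotp x s * dotp y s)
      rw [dotp_neg_left]; ring
    rw [key2, integral_neg] at key
    linarith

include hu hsupp hinv in
lemma quad_diag (x y : Fin n → ℝ) (hx : dotp u x = 0) (hy : dotp u y = 0)
    (hxx : dotp x x = dotp y y) :
    ∫ s, dotp x s * dotp x s ∂μ = ∫ s, dotp y s * dotp y s ∂μ := by
  by_cases hxy : x = y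
  · rw [hxy]
  · set v := x - y with hvdef
    have hv : v ≠ 0 := sub_ne_zero.mpr hxy
    have hvv := dotp_self_ne_zero hv
    have hvu : dotp v u = 0 := by
      rw [hvdef, dotp_sub_left, dotp_comm x u, dotp_comm y u, hx, hy]; ring
    have hfix : (hh v).mulVec u = u := hh_mulVec_orth v u hvu
    have key := quad_invariance μ u hu hsupp hinv (hh v) (hh_orth v hvv) (hh_symm v) hfix x x
    have hvx_eq : dotp v x = dotp x x - dotp y x := by
      rw [hvdef, dotp_sub_left]
    have hvv2 : dotp v v = 2 * dotp v x := by
      rw [hvx_eq, hvdef, dotp_sub_left, dotp_sub_right, dotp_sub_right, dotp_comm y x]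
      linarith [hxx]
    have hvx : dotp v x ≠ 0 := fun h0 => hvv (by rw [hvv2, h0]; ring)
    have hOx : (hh v).mulVec x = y := by
      rw [hh_mulVec, hvv2]
      have hc : 2 / (2 * dotp v x) * dotp v x = 1 := by field_simp
      rw [hc, one_smul, hvdef]
      abel
    rw [hOx] at key
    exact key

include hu in
lemma exists_unit_orth (hn : 2 ≤ n) : ∃ z : Fin n → ℝ, dotp z z = 1 ∧ dotp u z = 0 := by
  -- first find a nonzero vector orthogonal to u
  have hw : ∃ w : Fin n → ℝ, w ≠ 0 ∧ dotp u w = 0 := by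
    obtain ⟨i0, i1, hne⟩ : ∃ i0 i1 : Fin n, i0 ≠ i1 := by
      refine ⟨⟨0, by omega⟩, ⟨1, by omega⟩, ?_⟩
      simp [Fin.ext_iff]
    have hsingle : ∀ j : Fin n, dotp u (Pi.single j 1) = u j := by
      intro j
      simp [dotp, Pi.single_apply, Finset.sum_ite_eq']
    have horth : ∀ j : Fin n, dotp u (Pi.single j 1 - u j • u) = 0 := by
      intro j
      rw [dotp_sub_right, dotp_smul_right, hsingle, hu]; ring
    by_cases h0 : Pi.single i0 1 - u i0 • u = 0
    · refine ⟨Pi.single i1 1 - u i1 • u, ?_, horth i1⟩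
      intro h1
      have e0 : ∀ k, (Pi.single i0 1 : Fin n → ℝ) k = u i0 * u k := by
        intro k
        have := congrFun h0 k
        simpa [sub_eq_zero] using this
      have e1 : ∀ k, (Pi.single i1 1 : Fin n → ℝ) k = u i1 * u k := by
        intro k
        have := congrFun h1 k
        simpa [sub_eq_zero] using this
      have h00 : (1:ℝ) = u i0 * u i0 := by simpa using e0 i0
      have h01 : (0:ℝ) = u i0 * u i1 := by
        have := e0 i1
        simpa [Pi.single_apply, hne] using this
      have h11 : (1:ℝ) = u i1 * u i1 := by simpa using e1 i1
      nlinarith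
    · exact ⟨_, h0, horth i0⟩
  obtain ⟨w, hw0, hwu⟩ := hw
  have hww : 0 < dotp w w :=
    lt_of_le_of_ne (dotp_self_nonneg w) (Ne.symm (dotp_self_ne_zero hw0))
  refine ⟨(Real.sqrt (dotp w w))⁻¹ • w, ?_, ?_⟩
  · rw [dotp_smul_left, dotp_smul_right]
    have : Real.sqrt (dotp w w) * Real.sqrt (dotp w w) = dotp w w :=
      Real.mul_self_sqrt hww.le
    have hs0 : Real.sqrt (dotp w w) ≠ 0 := by positivity
    rw [← this]
    field_simp
    rw [Real.sqrt_sq (Real.sqrt_nonneg _)]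
  · rw [dotp_smul_right, hwu]; ring

include hu hsupp hinv in
lemma quad_diag_val (z : Fin n → ℝ) (hz1 : dotp z z = 1) (hzu : dotp u z = 0)
    (x : Fin n → ℝ) (hx : dotp u x = 0) :
    ∫ s, dotp x s * dotp x s ∂μ = dotp x x * ∫ s, dotp z s * dotp z s ∂μ := by
  by_cases hx0 : x = 0
  · simp [hx0, dotp_zero_left]
  · have htpos : 0 < dotp x x :=
      lt_of_le_of_ne (dotp_self_nonneg x) (Ne.symm (dotp_self_ne_zero hx0))
    set t := Real.sqrt (dotp x x) with htdef
    have ht2 : t * t = dotp x x := Real.mul_self_sqrt htpos.le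
    have hyy : dotp (t • z) (t • z) = dotp x x := by
      rw [dotp_smul_left, dotp_smul_right, hz1]
      rw [← ht2]; ring
    have hyu : dotp u (t • z) = 0 := by rw [dotp_smul_right, hzu]; ring
    have key := quad_diag μ u hu hsupp hinv x (t • z) hx hyu hyy.symm
    rw [key]
    have hpt : ∀ s : Fin n → ℝ, dotp (t • z) s * dotp (t • z) s
        = dotp x x * (dotp z s * dotp z s) := by
      intro s
      rw [dotp_smul_left, ← ht2]; ring
    calc ∫ s, dotp (t • z) s * dotp (t • z) s ∂μ
        = ∫ s, dotp x x * (dotp z s * dotp z s) ∂μ :=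
          integral_congr_ae (Filter.Eventually.of_forall fun s => hpt s)
      _ = dotp x x * ∫ s, dotp z s * dotp z s ∂μ := MeasureTheory.integral_const_mul _ _

include hu hsupp hinv in
lemma quad_bilinear (z : Fin n → ℝ) (hz1 : dotp z z = 1) (hzu : dotp u z = 0)
    (x y : Fin n → ℝ) (hx : dotp u x = 0) (hy : dotp u y = 0) :
    ∫ s, dotp x s * dotp y s ∂μ = dotp x y * ∫ s, dotp z s * dotp z s ∂μ := by
  have hs1 : ∀ᵐ s ∂μ, dotp s s = 1 := hsupp.mono fun s h => h.1
  by_cases hx0 : x = 0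
  · simp [hx0, dotp_zero_left]
  · have hxx : dotp x x ≠ 0 := dotp_self_ne_zero hx0
    set c := dotp x y / dotp x x with hcdef
    set w := y - c • x with hwdef
    have hxw : dotp x w = 0 := by
      rw [hwdef, dotp_sub_right, dotp_smul_right, hcdef]
      field_simp
      ring
    have huw : dotp u w = 0 := by
      rw [hwdef, dotp_sub_right, dotp_smul_right, hy, hx]; ring
    have split : ∀ s : Fin n → ℝ, dotp x s * dotp y s
        = c * (dotp x s * dotp x s) + dotp x s * dotp w s := by
      intro s
      have : dotp w s = dotp y s - c * dotp x s := by
        rw [hwdef, dotp_sub_left, dotp_smul_left]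
      rw [this]; ring
    calc ∫ s, dotp x s * dotp y s ∂μ
        = ∫ s, (c * (dotp x s * dotp x s) + dotp x s * dotp w s) ∂μ :=
          integral_congr_ae (Filter.Eventually.of_forall fun s => split s)
      _ = ∫ s, c * (dotp x s * dotp x s) ∂μ + ∫ s, dotp x s * dotp w s ∂μ :=
          integral_add ((integrable_quad μ hs1 x x).const_mul c) (integrable_quad μ hs1 x w)
      _ = c * ∫ s, dotp x s * dotp x s ∂μ + 0 := by
          rw [MeasureTheory.integral_const_mul, quad_orth μ u hu hsupp hinv x w hxw huw]
      _ = c * (dotp x x * ∫ s, dotp z s * dotp z s ∂μ) + 0 := by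
          rw [quad_diag_val μ u hu hsupp hinv z hz1 hzu x hx]
      _ = dotp x y * ∫ s, dotp z s * dotp z s ∂μ := by
          rw [hcdef]; field_simp; ring

include hu hsupp hinv in
lemma quad_general (z : Fin n → ℝ) (hz1 : dotp z z = 1) (hzu : dotp u z = 0)
    (a b : Fin n → ℝ) :
    ∫ s, dotp a s * dotp b s ∂μ
      = (dotp a b - dotp a u * dotp b u) * ∫ s, dotp z s * dotp z s ∂μ := by
  set a' := a - dotp a u • u with ha'def
  set b' := b - dotp b u • u with hb'def
  have hua' : dotp u a' = 0 := by
    rw [ha'def, dotp_sub_right, dotp_smul_right, hu, dotp_comm u a]; ring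
  have hub' : dotp u b' = 0 := by
    rw [hb'def, dotp_sub_right, dotp_smul_right, hu, dotp_comm u b]; ring
  have hcong : ∫ s, dotp a s * dotp b s ∂μ = ∫ s, dotp a' s * dotp b' s ∂μ := by
    refine integral_congr_ae ?_
    filter_upwards [hsupp] with s hs
    have hus : dotp u s = 0 := by rw [dotp_comm]; exact hs.2
    have h1 : dotp a' s = dotp a s := by
      rw [ha'def, dotp_sub_left, dotp_smul_left, hus]; ring
    have h2 : dotp b' s = dotp b s := by
      rw [hb'def, dotp_sub_left, dotp_smul_left, hus]; ring
    rw [h1, h2]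
  rw [hcong, quad_bilinear μ u hu hsupp hinv z hz1 hzu a' b' hua' hub']
  congr 1
  simp only [ha'def, hb'def, dotp_sub_left, dotp_sub_right, dotp_smul_left,
    dotp_smul_right, hu]
  rw [dotp_comm u b]
  ring

include hu hsupp hinv in
lemma second_moment (hn : 2 ≤ n) (a b : Fin n → ℝ) :
    ∫ s, dotp a s * dotp b s ∂μ
      = (dotp a b - dotp a u * dotp b u) / ((n : ℝ) - 1) := by
  obtain ⟨z, hz1, hzu⟩ := exists_unit_orth u hu hn
  have hs1 : ∀ᵐ s ∂μ, dotp s s = 1 := hsupp.mono fun s h => h.1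
  have hzz : ∫ s, dotp z s * dotp z s ∂μ = 1 / ((n : ℝ) - 1) := by
    have hsum1 : ∑ j : Fin n, ∫ s, dotp (Pi.single j 1) s * dotp (Pi.single j 1) s ∂μ = 1 := by
      rw [← integral_finset_sum _ (fun j _ => integrable_quad μ hs1 _ _)]
      have hae : ∀ᵐ s ∂μ,
          (∑ j : Fin n, dotp (Pi.single j 1) s * dotp (Pi.single j 1) s) = 1 := by
        filter_upwards [hs1] with s h1
        have hsj : ∀ j : Fin n, dotp (Pi.single j 1) s = s j := by
          intro j
          simp [dotp, Pi.single_apply, Finset.sum_ite_eq]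
        calc (∑ j : Fin n, dotp (Pi.single j 1) s * dotp (Pi.single j 1) s)
            = ∑ j : Fin n, s j * s j := by
              exact Finset.sum_congr rfl fun j _ => by rw [hsj j]
          _ = 1 := h1
      rw [integral_congr_ae hae]
      simp
    have hsum2 : ∑ j : Fin n, ∫ s, dotp (Pi.single j 1) s * dotp (Pi.single j 1) s ∂μ
        = ((n : ℝ) - 1) * ∫ s, dotp z s * dotp z s ∂μ := by
      have hterm : ∀ j : Fin n, ∫ s, dotp (Pi.single j 1) s * dotp (Pi.single j 1) s ∂μ
          = (1 - u j * u j) * ∫ s, dotp z s * dotp z s ∂μ := by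
        intro j
        rw [quad_general μ u hu hsupp hinv z hz1 hzu (Pi.single j 1) (Pi.single j 1)]
        congr 1
        have h1 : dotp (Pi.single j 1) (Pi.single j 1) = (1:ℝ) := by
          simp [dotp, Pi.single_apply, Finset.sum_ite_eq]
        have h2 : dotp (Pi.single j 1) u = u j := by
          simp [dotp, Pi.single_apply, Finset.sum_ite_eq]
        rw [h1, h2]
      rw [Finset.sum_congr rfl fun j _ => hterm j, ← Finset.sum_mul]
      congr 1
      have : ∑ j : Fin n, (1 - u j * u j) = (n : ℝ) - dotp u u := by
        rw [Finset.sum_sub_distrib]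
        simp [dotp]
      rw [this, hu]
    have hne : ((n : ℝ) - 1) ≠ 0 := by
      have : (2 : ℝ) ≤ (n : ℝ) := by exact_mod_cast hn
      linarith
    rw [hsum1] at hsum2
    field_simp at hsum2 ⊢
    linarith
  rw [quad_general μ u hu hsupp hinv z hz1 hzu a b, hzz]
  ring

end Moments2

/-- **Unbiasedness of the lifted linear-bandit estimator.**
`H` is symmetric positive definite with symmetric positive definite square root `R`
(`R * R = H`, so `H^{1/2} = R` and `H^{-1/2} = R⁻¹`); `s` is sampled uniformly
(rotation-invariantly) from the unit sphere of the orthogonal complement of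
`H^{-1/2} e_{d+1}`; `w̃⁺ = w⁺ + H^{-1/2} s` and `ℓ̂⁺ = d ⟨w̃⁺, ℓ⁺⟩ H^{1/2} s` with
`ℓ⁺ = (ℓ, 0)`.  Then `E[ℓ̂⁺ i] = ℓ i` for `i ∈ {1,…,d}`, and more precisely
`E[ℓ̂⁺] = ℓ⁺ − e_{d+1} e_{d+1}ᵀ H⁻¹ ℓ⁺ / ‖H^{-1/2} e_{d+1}‖₂²`. -/
theorem lifted_estimator_unbiased (d : ℕ) (hd : 1 ≤ d)
    (H R : Matrix (Fin (d + 1)) (Fin (d + 1)) ℝ)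
    (hH : H.PosDef) (hHsymm : H.IsSymm)
    (hR : R.PosDef) (hRsymm : R.IsSymm) (hRsq : R * R = H)
    (wp : Fin (d + 1) → ℝ) (ℓ : Fin d → ℝ)
    (lp : Fin (d + 1) → ℝ) (hlp : lp = Fin.snoc ℓ 0)
    (e : Fin (d + 1) → ℝ) (he : e = Pi.single (Fin.last d) 1)
    (μs : Measure (Fin (d + 1) → ℝ)) [IsProbabilityMeasure μs]
    -- support: unit sphere of the hyperplane orthogonal to H^{-1/2} e_{d+1}
    (hsupp : ∀ᵐ s ∂μs, dotp s s = 1 ∧ dotp s (R⁻¹.mulVec e) = 0)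
    -- uniformity: invariance under all orthogonal maps fixing H^{-1/2} e_{d+1}
    (hinv : ∀ O : Matrix (Fin (d + 1)) (Fin (d + 1)) ℝ, Oᵀ * O = 1 →
      O.mulVec (R⁻¹.mulVec e) = R⁻¹.mulVec e → Measure.map O.mulVec μs = μs) :
    (∀ i : Fin d,
      ∫ s, (d : ℝ) * dotp (wp + R⁻¹.mulVec s) lp * (R.mulVec s) i.castSucc ∂μs
        = ℓ i) ∧
    (∀ i : Fin (d + 1),
      ∫ s, (d : ℝ) * dotp (wp + R⁻¹.mulVec s) lp * (R.mulVec s) i ∂μs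
        = lp i - (if i = Fin.last d then (H⁻¹.mulVec lp) (Fin.last d) else 0)
            / dotp (R⁻¹.mulVec e) (R⁻¹.mulVec e)) := by
  have hdetR : IsUnit R.det := isUnit_iff_ne_zero.mpr (ne_of_gt hR.det_pos)
  have hRRinv : R * R⁻¹ = 1 := Matrix.mul_nonsing_inv R hdetR
  have hRinvT : R⁻¹ᵀ = R⁻¹ := by
    rw [Matrix.transpose_nonsing_inv, hRsymm.eq]
  set v := R⁻¹.mulVec e with hvdef
  have hRv : R.mulVec v = e := by
    rw [hvdef, Matrix.mulVec_mulVec, hRRinv, Matrix.one_mulVec]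
  have hv0 : v ≠ 0 := by
    intro h
    have he0 : e ≠ 0 := by
      intro h'
      have := congrFun h' (Fin.last d)
      simp [he] at this
    apply he0
    rw [← hRv, h, Matrix.mulVec_zero]
  have hc : 0 < dotp v v :=
    lt_of_le_of_ne (dotp_self_nonneg v) (Ne.symm (dotp_self_ne_zero hv0))
  set c := dotp v v with hcdef
  have hsq : Real.sqrt c * Real.sqrt c = c := Real.mul_self_sqrt hc.le
  have hsqne : Real.sqrt c ≠ 0 := by positivity
  set u := (Real.sqrt c)⁻¹ • v with hudef
  have hu : dotp u u = 1 := by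
    rw [hudef, dotp_smul_left, dotp_smul_right, ← hcdef, ← hsq]
    field_simp
    rw [Real.sqrt_sq (Real.sqrt_nonneg _)]
  have hsupp' : ∀ᵐ s ∂μs, dotp s s = 1 ∧ dotp s u = 0 := by
    filter_upwards [hsupp] with s hs
    exact ⟨hs.1, by rw [hudef, dotp_smul_right, hs.2]; ring⟩
  have hinv' : ∀ O : Matrix (Fin (d + 1)) (Fin (d + 1)) ℝ, Oᵀ * O = 1 →
      O.mulVec u = u → Measure.map O.mulVec μs = μs := by
    intro O h1 h2
    apply hinv O h1
    have hvu : v = Real.sqrt c • u := by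
      rw [hudef, smul_smul, mul_inv_cancel₀ hsqne, one_smul]
    show O.mulVec v = v
    rw [hvu, Matrix.mulVec_smul, h2]
  have hs1 : ∀ᵐ s ∂μs, dotp s s = 1 := hsupp'.mono fun s h => h.1
  set p := R⁻¹.mulVec lp with hpdef
  have hn2 : 2 ≤ d + 1 := by omega
  have hdpos : (0:ℝ) < (d:ℝ) := by exact_mod_cast hd
  -- the key per-coordinate computation
  have main : ∀ i : Fin (d + 1),
      ∫ s, (d : ℝ) * dotp (wp + R⁻¹.mulVec s) lp * (R.mulVec s) i ∂μs
        = lp i - (if i = Fin.last d then (H⁻¹.mulVec lp) (Fin.last d) else 0) / c := by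
    intro i
    set r : Fin (d + 1) → ℝ := fun j => R i j with hrdef
    have hr : ∀ s : Fin (d + 1) → ℝ, (R.mulVec s) i = dotp r s := fun s => rfl
    have hsplit : ∀ s : Fin (d + 1) → ℝ,
        (d : ℝ) * dotp (wp + R⁻¹.mulVec s) lp * (R.mulVec s) i
          = ((d:ℝ) * dotp wp lp) * dotp r s + (d:ℝ) * (dotp p s * dotp r s) := by
      intro s
      have h1 : dotp (R⁻¹.mulVec s) lp = dotp p s := by
        rw [dotp_comm, dotp_mulVec_right, hRinvT, ← hpdef]
      rw [hr, dotp_add_left, h1]; ring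
    have hint : ∫ s, (d : ℝ) * dotp (wp + R⁻¹.mulVec s) lp * (R.mulVec s) i ∂μs
        = ((d:ℝ) * dotp wp lp) * ∫ s, dotp r s ∂μs
          + (d:ℝ) * ∫ s, dotp p s * dotp r s ∂μs := by
      rw [integral_congr_ae (Filter.Eventually.of_forall hsplit),
        integral_add ((integrable_lin μs hs1 r).const_mul _)
          ((integrable_quad μs hs1 p r).const_mul _),
        MeasureTheory.integral_const_mul, MeasureTheory.integral_const_mul]
    rw [hint, first_moment μs u hu hsupp' hinv' r,
      second_moment μs u hu hsupp' hinv' hn2 p r]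
    -- algebraic identities
    have hpr : dotp p r = lp i := by
      rw [dotp_comm]
      show (R.mulVec p) i = lp i
      rw [hpdef, Matrix.mulVec_mulVec, hRRinv, Matrix.one_mulVec]
    have hrv : dotp r v = e i := by
      show (R.mulVec v) i = e i
      rw [hRv]
    have hpv : dotp p v = (H⁻¹.mulVec lp) (Fin.last d) := by
      rw [hvdef, dotp_mulVec_right, hRinvT, hpdef, Matrix.mulVec_mulVec]
      have hHinv : R⁻¹ * R⁻¹ = H⁻¹ := by
        rw [← hRsq, Matrix.mul_inv_rev]
      rw [hHinv, he]
      simp [dotp, Pi.single_apply, mul_ite, Finset.sum_ite_eq']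
    have hru : dotp r u = (Real.sqrt c)⁻¹ * e i := by
      rw [hudef, dotp_smul_right, hrv]
    have hpu : dotp p u = (Real.sqrt c)⁻¹ * (H⁻¹.mulVec lp) (Fin.last d) := by
      rw [hudef, dotp_smul_right, hpv]
    rw [hpr, hru, hpu]
    have hei : e i = if i = Fin.last d then (1:ℝ) else 0 := by
      rw [he]; simp [Pi.single_apply]
    have hcast : ((d+1 : ℕ) : ℝ) - 1 = (d:ℝ) := by push_cast; ring
    rw [hcast, hei]
    have hinvsq : (Real.sqrt c)⁻¹ * (Real.sqrt c)⁻¹ = c⁻¹ := by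
      rw [← mul_inv, hsq]
    by_cases hil : i = Fin.last d
    · simp only [hil, if_pos]
      have h2 : (Real.sqrt c)⁻¹ * (H⁻¹.mulVec lp) (Fin.last d) * ((Real.sqrt c)⁻¹ * 1)
          = (H⁻¹.mulVec lp) (Fin.last d) / c := by
        rw [mul_one, div_eq_mul_inv, ← hinvsq]; ring
      rw [h2, mul_zero, zero_add, mul_comm ((d:ℝ)) _,
        div_mul_cancel₀ _ (ne_of_gt hdpos)]
    · simp only [hil, if_neg, not_false_iff]
      field_simp
      ring
  refine ⟨?_, main⟩
  intro i
  rw [main i.castSucc]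
  have h1 : i.castSucc ≠ Fin.last d := ne_of_lt (Fin.castSucc_lt_last i)
  rw [if_neg h1, hlp]
  simp [Fin.snoc_castSucc]
end

section
/- Determinant-doubling step: Let A and H be symmetric positive semidefinite (d+1)×(d+1) real matrices with A positive definite, and suppose there exists a vector p ∈ R^{d+1} with pᵀHp ≥ pᵀAp. Then det(A + H) ≥ 2·det(A). -/
open Matrix Finset
open scoped MatrixOrder

lemma det_one_add_aux {n : Type*} [Fintype n] [DecidableEq n] {M : Matrix n n ℝ}
    (hM : M.PosSemidef) {q : n → ℝ} (hq : q ≠ 0)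
    (hle : q ⬝ᵥ q ≤ M.mulVec q ⬝ᵥ q) : 2 ≤ (1 + M).det := by
  have hH := hM.1
  set U : Matrix n n ℝ := (hH.eigenvectorUnitary : Matrix n n ℝ) with hUdef
  have hU : U ∈ Matrix.unitaryGroup n ℝ := hH.eigenvectorUnitary.2
  have hUU : U * star U = 1 := (Matrix.mem_unitaryGroup_iff).mp hU
  have hUU' : star U * U = 1 := (Matrix.mem_unitaryGroup_iff').mp hU
  set eig : n → ℝ := hH.eigenvalues with heig
  have hspec : M = U * diagonal eig * star U := by
    have := hH.spectral_theorem
    simpa using this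
  have hstarT : star U = Uᵀ := by
    rw [Matrix.star_eq_conjTranspose, conjTranspose_eq_transpose_of_trivial]
  have key : ∀ x y : n → ℝ, (U *ᵥ x) ⬝ᵥ (U *ᵥ y) = x ⬝ᵥ y := by
    intro x y
    rw [dotProduct_mulVec, ← vecMul_transpose, ← hstarT, vecMul_vecMul, hUU', vecMul_one]
  set c : n → ℝ := (star U) *ᵥ q with hc
  have hqc : q = U *ᵥ c := by rw [hc, mulVec_mulVec, hUU, one_mulVec]
  have hcne : c ≠ 0 := by
    intro h
    apply hq
    rw [hqc, h, mulVec_zero]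
  have hqq : q ⬝ᵥ q = ∑ i, c i * c i := by rw [hqc, key]; rfl
  have hMq : M *ᵥ q ⬝ᵥ q = ∑ i, eig i * c i * (c i) := by
    have h3 : star U *ᵥ (U *ᵥ c) = c := by rw [mulVec_mulVec, hUU', one_mulVec]
    conv_lhs => rw [hqc]
    rw [hspec, ← mulVec_mulVec, ← mulVec_mulVec, h3, key]
    simp [dotProduct, mulVec_diagonal]
  -- some eigenvalue is ≥ 1
  have hex : ∃ i, 1 ≤ eig i := by
    by_contra hcon
    push_neg at hcon
    have hj : ∃ j, c j ≠ 0 := Function.ne_iff.mp hcne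
    obtain ⟨j, hj⟩ := hj
    have hlt : ∑ i, eig i * c i * c i < ∑ i, c i * c i := by
      refine Finset.sum_lt_sum (fun i _ => ?_) ⟨j, Finset.mem_univ j, ?_⟩
      · have h1 : 0 ≤ c i * c i := mul_self_nonneg _
        nlinarith [hcon i]
      · have h1 : 0 < c j * c j := mul_self_pos.mpr hj
        nlinarith [hcon j]
    rw [hqq] at hle
    rw [hMq] at hle
    linarith
  obtain ⟨i₀, hi₀⟩ := hex
  have hdet : (1 + M).det = ∏ i, (1 + eig i) := by
    have h1 : (1 : Matrix n n ℝ) + M = U * (1 + diagonal eig) * star U := by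
      rw [mul_add, add_mul, hspec, mul_one, hUU]
    rw [h1, det_mul, det_mul]
    have : U.det * (star U).det = 1 := by
      rw [← det_mul, hUU, det_one]
    rw [mul_right_comm, ← det_mul, hUU, det_one, one_mul]
    have h2 : (1 : Matrix n n ℝ) + diagonal eig = diagonal (fun i => 1 + eig i) := by
      rw [← diagonal_one, diagonal_add]
    rw [h2, det_diagonal]
  rw [hdet, ← Finset.mul_prod_erase univ _ (mem_univ i₀)]
  have h1 : (1:ℝ) ≤ ∏ j ∈ univ.erase i₀, (1 + eig j) := by
    have := Finset.prod_le_prod (s := univ.erase i₀) (f := fun _ => (1:ℝ))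
      (g := fun j => 1 + eig j) (fun i _ => by norm_num)
      (fun i _ => by
        show (1:ℝ) ≤ 1 + eig i
        have h : (0:ℝ) ≤ eig i := hM.eigenvalues_nonneg i
        linarith)
    simpa using this
  have h2 : (2:ℝ) ≤ 1 + eig i₀ := by linarith
  calc (2:ℝ) ≤ 1 + eig i₀ := h2
    _ ≤ (1 + eig i₀) * ∏ j ∈ univ.erase i₀, (1 + eig j) :=
        le_mul_of_one_le_right (by linarith) h1

/-- **Determinant-doubling step.**
Let `A` and `H` be symmetric positive semidefinite `(d+1)×(d+1)` real matrices with `A`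
positive definite, and suppose there exists a (nonzero) vector `p` with
`pᵀ H p ≥ pᵀ A p`.  Then `det (A + H) ≥ 2 det A`. -/
theorem det_doubling (d : ℕ) (A H : Matrix (Fin (d + 1)) (Fin (d + 1)) ℝ)
    (hA : A.PosDef) (hH : H.PosSemidef)
    (hp : ∃ p : Fin (d + 1) → ℝ, p ≠ 0 ∧ A.mulVec p ⬝ᵥ p ≤ H.mulVec p ⬝ᵥ p) :
    2 * A.det ≤ (A + H).det := by
  obtain ⟨p, hpne, hple⟩ := hp
  have hAps : A.PosSemidef := hA.posSemidef
  set S : Matrix (Fin (d+1)) (Fin (d+1)) ℝ := CFC.sqrt A with hSdef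
  have hS : S.PosSemidef := (CFC.sqrt_nonneg A).posSemidef
  have hSS : S * S = A := CFC.sqrt_mul_sqrt_self A hAps.nonneg
  have hdetA : 0 < A.det := hA.det_pos
  have hdet2 : S.det * S.det = A.det := by rw [← det_mul, hSS]
  have hdetS : S.det ≠ 0 := by
    intro h
    rw [h, mul_zero] at hdet2
    linarith
  have hSunit : IsUnit S.det := hdetS.isUnit
  have hSinv : S * S⁻¹ = 1 := Matrix.mul_nonsing_inv S hSunit
  have hSinv' : S⁻¹ * S = 1 := Matrix.nonsing_inv_mul S hSunit
  have hSH : S.IsHermitian := hS.1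
  have hSiH : S⁻¹.IsHermitian := hSH.inv
  have hST : Sᵀ = S := by rw [← conjTranspose_eq_transpose_of_trivial, hSH.eq]
  have hSiT : S⁻¹ᵀ = S⁻¹ := by rw [← conjTranspose_eq_transpose_of_trivial, hSiH.eq]
  set M : Matrix (Fin (d+1)) (Fin (d+1)) ℝ := S⁻¹ * H * S⁻¹ with hMdef
  have hMpsd : M.PosSemidef := by
    have := hH.mul_mul_conjTranspose_same S⁻¹
    rwa [hSiH.eq] at this
  set q : Fin (d+1) → ℝ := S *ᵥ p with hqdef
  have hq0 : q ≠ 0 := by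
    intro h
    apply hpne
    have : S⁻¹ *ᵥ (S *ᵥ p) = 0 := by rw [← hqdef, h, mulVec_zero]
    rwa [mulVec_mulVec, hSinv', one_mulVec] at this
  have hq1 : q ⬝ᵥ q = A *ᵥ p ⬝ᵥ p := by
    rw [hqdef, dotProduct_mulVec, ← mulVec_transpose, hST, mulVec_mulVec, hSS]
  have hq2 : M *ᵥ q ⬝ᵥ q = H *ᵥ p ⬝ᵥ p := by
    have h1 : M *ᵥ q = S⁻¹ *ᵥ (H *ᵥ p) := by
      rw [hqdef, hMdef, ← mulVec_mulVec, ← mulVec_mulVec, mulVec_mulVec p S⁻¹ S, hSinv',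
        one_mulVec]
    rw [h1, hqdef, dotProduct_mulVec, ← mulVec_transpose, hST, mulVec_mulVec, hSinv,
      one_mulVec]
  have hle' : q ⬝ᵥ q ≤ M *ᵥ q ⬝ᵥ q := by rw [hq1, hq2]; exact hple
  have h2 : 2 ≤ (1 + M).det := det_one_add_aux hMpsd hq0 hle'
  have hfactor : A + H = S * (1 + M) * S := by
    have hSMS : S * M * S = H := by
      rw [hMdef, ← mul_assoc, ← mul_assoc, hSinv, one_mul, mul_assoc, hSinv', mul_one]
    rw [mul_add, mul_one, add_mul, hSS, hSMS]
  rw [hfactor, det_mul, det_mul]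
  nlinarith [hdet2, h2, hdetS]
end
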